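/- Let 𝒢 = (G,I,O,λ) be a labelled open graph with I∩O = ∅ and λ(v) ∈ {X, XY} for all non-outputs. Then 𝒢 has a focussed Pauli flow if and only if there exists a directed graph F = (V, E_F) such that: (i) the subgraph F' consisting of edges (u,v) ∈ E_F with λ(u) = XY is acyclic, and (ii) A_G|_{I̅}^{O̅} · A_F|_{O̅}^{I̅} = Id_{O̅} over F₂, where A_F|_{O̅}^{I̅} is the I̅ × O̅ submatrix of the adjacency (incidence) matrix of F obtained by removing input rows and output columns. Moreover, the columns of A_F|_{O̅}^{I̅} encode the correction sets. -/

import Mathlib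

inductive MLabel | X | Y | Z | XY | XZ | YZ
deriving DecidableEq

open Finset

variable {V : Type} [Fintype V] [DecidableEq V]

/-- The odd neighbourhood of a set of vertices. -/
def Odds (G : SimpleGraph V) [DecidableRel G.Adj] (A : Finset V) : Finset V :=
  Finset.univ.filter fun v => Odd (A ∩ G.neighborFinset v).card

/-- Pauli flow conditions (P1)-(P9) for a labelled open graph. -/
structure PauliFlow (G : SimpleGraph V) [DecidableRel G.Adj]
    (I O : Finset V) (lam : V → MLabel) (c : V → Finset V) (prec : V → V → Prop) : Prop where
  irrefl : ∀ u, ¬ prec u u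
  trans : ∀ u v w, prec u v → prec v w → prec u w
  csub : ∀ u, u ∉ O → ∀ v ∈ c u, v ∉ I
  P1 : ∀ u, u ∉ O → ∀ v ∈ c u, v ∉ O → u ≠ v →
      lam v ≠ MLabel.X → lam v ≠ MLabel.Y → prec u v
  P2 : ∀ u, u ∉ O → ∀ v ∈ Odds G (c u), v ∉ O → u ≠ v →
      lam v ≠ MLabel.Y → lam v ≠ MLabel.Z → prec u v
  P3 : ∀ u, u ∉ O → ∀ v, v ∉ O → ¬ prec u v → u ≠ v → lam v = MLabel.Y →
      (v ∈ c u ↔ v ∈ Odds G (c u))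
  P4 : ∀ u, u ∉ O → lam u = MLabel.XY → u ∉ c u ∧ u ∈ Odds G (c u)
  P5 : ∀ u, u ∉ O → lam u = MLabel.XZ → u ∈ c u ∧ u ∈ Odds G (c u)
  P6 : ∀ u, u ∉ O → lam u = MLabel.YZ → u ∈ c u ∧ u ∉ Odds G (c u)
  P7 : ∀ u, u ∉ O → lam u = MLabel.X → u ∈ Odds G (c u)
  P8 : ∀ u, u ∉ O → lam u = MLabel.Z → u ∈ c u
  P9 : ∀ u, u ∉ O → lam u = MLabel.Y → Xor' (u ∈ c u) (u ∈ Odds G (c u))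

/-- Focussing conditions (F1)-(F3). -/
def Focussed (G : SimpleGraph V) [DecidableRel G.Adj]
    (O : Finset V) (lam : V → MLabel) (c : V → Finset V) : Prop :=
  ∀ v, v ∉ O →
    (∀ w, w ∉ O → w ≠ v → w ∈ c v →
      lam w = MLabel.XY ∨ lam w = MLabel.X ∨ lam w = MLabel.Y) ∧
    (∀ w, w ∉ O → w ≠ v → w ∈ Odds G (c v) →
      lam w = MLabel.XZ ∨ lam w = MLabel.YZ ∨ lam w = MLabel.Y ∨ lam w = MLabel.Z) ∧
    (∀ w, w ∉ O → w ≠ v → lam w = MLabel.Y → (w ∈ c v ↔ w ∈ Odds G (c v)))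

/-- The reduced adjacency matrix over F₂: rows indexed by non-outputs, columns by non-inputs. -/
def redAdj (G : SimpleGraph V) [DecidableRel G.Adj] (I O : Finset V) :
    Matrix {v : V // v ∉ O} {v : V // v ∉ I} (ZMod 2) :=
  Matrix.of fun v u => if G.Adj v.val u.val then 1 else 0

/-- The `I̅ × O̅` submatrix over F₂ of the adjacency matrix of a directed graph
given by `F : V → V → Bool` (entry `(u,v)` is 1 iff there is an edge `u → v`). -/
def dirAdj (I O : Finset V) (F : V → V → Bool) :
    Matrix {v : V // v ∉ I} {v : V // v ∉ O} (ZMod 2) :=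
  Matrix.of fun u w => if F u.val w.val = true then 1 else 0

lemma zmod2_cast_eq_one_iff (n : ℕ) : ((n : ZMod 2) = 1) ↔ Odd n := by
  rw [Nat.odd_iff, ← ZMod.natCast_mod n 2]
  rcases Nat.mod_two_eq_zero_or_one n with h | h <;> simp [h]

lemma zmod2_cast_eq_zero_iff (n : ℕ) : ((n : ZMod 2) = 0) ↔ ¬ Odd n := by
  rw [Nat.odd_iff, ← ZMod.natCast_mod n 2]
  rcases Nat.mod_two_eq_zero_or_one n with h | h <;> simp [h]

lemma entry_eq (G : SimpleGraph V) [DecidableRel G.Adj] (I O : Finset V)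
    (F : V → V → Bool) (v w : {v : V // v ∉ O}) :
    (redAdj G I O * dirAdj I O F) v w =
      (((Finset.univ.filter fun u => u ∉ I ∧ F u w.val = true) ∩
        G.neighborFinset v.val).card : ZMod 2) := by
  rw [Matrix.mul_apply]
  have h1 : ∀ u : {u : V // u ∉ I},
      redAdj G I O v u * dirAdj I O F u w =
        if G.Adj v.val u.val ∧ F u.val w.val = true then (1 : ZMod 2) else 0 := by
    intro u
    simp only [redAdj, dirAdj, Matrix.of_apply, ite_mul, one_mul, zero_mul, ← ite_and]
  rw [Finset.sum_congr rfl (fun u _ => h1 u), Finset.sum_boole]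
  congr 1
  apply Finset.card_bij (fun u _ => u.val)
  · intro a ha
    simp only [Finset.mem_filter, Finset.mem_univ, true_and] at ha
    simp only [Finset.mem_inter, Finset.mem_filter, Finset.mem_univ, true_and,
      SimpleGraph.mem_neighborFinset]
    exact ⟨⟨a.prop, ha.2⟩, ha.1⟩
  · intro a _ b _ h; exact Subtype.ext h
  · intro b hb
    simp only [Finset.mem_inter, Finset.mem_filter, Finset.mem_univ, true_and,
      SimpleGraph.mem_neighborFinset] at hb
    exact ⟨⟨b, hb.1.1⟩, by simp [hb.1.2, hb.2], rfl⟩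

lemma matrix_iff (G : SimpleGraph V) [DecidableRel G.Adj] (I O : Finset V)
    (F : V → V → Bool) :
    redAdj G I O * dirAdj I O F = 1 ↔
      ∀ v, v ∉ O → ∀ w, w ∉ O →
        (v ∈ Odds G (Finset.univ.filter fun u => u ∉ I ∧ F u w = true) ↔ v = w) := by
  rw [← Matrix.ext_iff]
  constructor
  · intro h v hv w hw
    have hh := h ⟨v, hv⟩ ⟨w, hw⟩
    rw [entry_eq, Matrix.one_apply] at hh
    simp only [Subtype.mk.injEq] at hh
    simp only [Odds, Finset.mem_filter, Finset.mem_univ, true_and]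
    by_cases hvw : v = w
    · simp only [hvw, if_pos rfl] at hh
      simpa [hvw] using (zmod2_cast_eq_one_iff _).mp hh
    · simp only [hvw, if_neg hvw] at hh
      exact ⟨fun ho => absurd ((zmod2_cast_eq_zero_iff _).mp hh) (not_not_intro ho),
        fun h' => absurd h' hvw⟩
  · intro h i j
    rw [entry_eq, Matrix.one_apply]
    have hh := h i.val i.prop j.val j.prop
    simp only [Odds, Finset.mem_filter, Finset.mem_univ, true_and] at hh
    by_cases hij : i = j
    · rw [if_pos hij]
      exact (zmod2_cast_eq_one_iff _).mpr (hh.mpr (by rw [hij]))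
    · rw [if_neg hij]
      refine (zmod2_cast_eq_zero_iff _).mpr fun ho => hij (Subtype.ext (hh.mp ho))

lemma part2_aux (G : SimpleGraph V) [DecidableRel G.Adj]
    (I O : Finset V) (lam : V → MLabel)
    (hlam : ∀ v, v ∉ O → lam v = MLabel.X ∨ lam v = MLabel.XY)
    (F : V → V → Bool)
    (hac : ∀ v, ¬ Relation.TransGen (fun a b => F a b = true ∧ lam a = MLabel.XY) v v)
    (hmat : redAdj G I O * dirAdj I O F = 1) :
    PauliFlow G I O lam
      (fun v => Finset.univ.filter fun u => u ∉ I ∧ F u v = true)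
      (Relation.TransGen (fun v w => F w v = true ∧ lam w = MLabel.XY)) ∧
    Focussed G O lam
      (fun v => Finset.univ.filter fun u => u ∉ I ∧ F u v = true) := by
  have key := (matrix_iff G I O F).mp hmat
  constructor
  · refine ⟨?_, ?_, ?_, ?_, ?_, ?_, ?_, ?_, ?_, ?_, ?_, ?_⟩
    · -- irrefl
      intro u h
      refine hac u ?_
      exact Relation.transGen_swap.mp h
    · exact fun u v w a b => a.trans b
    · intro u _ v hv
      exact (Finset.mem_filter.mp hv).2.1
    · -- P1
      intro u _ v hv hvO _ hX _
      have hXY : lam v = MLabel.XY := (hlam v hvO).resolve_left hX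
      exact Relation.TransGen.single ⟨(Finset.mem_filter.mp hv).2.2, hXY⟩
    · -- P2
      intro u hu v hv hvO hne _ _
      exact absurd ((key v hvO u hu).mp hv) (Ne.symm hne)
    · -- P3
      intro u _ v hvO _ _ hY
      rcases hlam v hvO with h | h <;> rw [h] at hY <;> cases hY
    · -- P4
      intro u hu hXY
      refine ⟨fun hmem => hac u (Relation.TransGen.single
        ⟨(Finset.mem_filter.mp hmem).2.2, hXY⟩), (key u hu u hu).mpr rfl⟩
    · intro u hu h; rcases hlam u hu with h' | h' <;> rw [h'] at h <;> cases h
    · intro u hu h; rcases hlam u hu with h' | h' <;> rw [h'] at h <;> cases h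
    · -- P7
      intro u hu _
      exact (key u hu u hu).mpr rfl
    · intro u hu h; rcases hlam u hu with h' | h' <;> rw [h'] at h <;> cases h
    · intro u hu h; rcases hlam u hu with h' | h' <;> rw [h'] at h <;> cases h
  · intro v hv
    refine ⟨fun w hw _ _ => ?_, fun w hw hne hOdds => ?_, fun w hw _ hY => ?_⟩
    · rcases hlam w hw with h | h
      · exact Or.inr (Or.inl h)
      · exact Or.inl h
    · exact absurd ((key w hw v hv).mp hOdds) hne
    · rcases hlam w hw with h | h <;> rw [h] at hY <;> cases hY

/-- A labelled open graph with `I ∩ O = ∅` and labels in {X, XY} has a focussed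
Pauli flow iff there is a directed graph `F` whose XY-sourced subgraph is
acyclic and whose reduced adjacency matrix is a right inverse of the reduced
adjacency matrix of `G`; moreover the columns of that matrix encode correction
sets of a focussed Pauli flow, with the order given by the transitive closure
of the reversed XY-sourced edges. -/
theorem focussed_flow_iff_dag (G : SimpleGraph V) [DecidableRel G.Adj]
    (I O : Finset V) (hIO : I ∩ O = ∅) (lam : V → MLabel)
    (hlam : ∀ v, v ∉ O → lam v = MLabel.X ∨ lam v = MLabel.XY) :
    ((∃ (c : V → Finset V) (prec : V → V → Prop),
        PauliFlow G I O lam c prec ∧ Focussed G O lam c) ↔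
      ∃ F : V → V → Bool,
        (∀ v, ¬ Relation.TransGen (fun a b => F a b = true ∧ lam a = MLabel.XY) v v) ∧
        redAdj G I O * dirAdj I O F = 1) ∧
    (∀ F : V → V → Bool,
      (∀ v, ¬ Relation.TransGen (fun a b => F a b = true ∧ lam a = MLabel.XY) v v) →
      redAdj G I O * dirAdj I O F = 1 →
        PauliFlow G I O lam
          (fun v => Finset.univ.filter fun u => u ∉ I ∧ F u v = true)
          (Relation.TransGen (fun v w => F w v = true ∧ lam w = MLabel.XY)) ∧
        Focussed G O lam
          (fun v => Finset.univ.filter fun u => u ∉ I ∧ F u v = true)) := by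
  refine ⟨⟨?_, ?_⟩, fun F hac hmat => part2_aux G I O lam hlam F hac hmat⟩
  · -- flow → existence of F
    rintro ⟨c, prec, pf, foc⟩
    refine ⟨fun u v => decide (v ∉ O ∧ u ∉ I ∧ u ∈ c v), ?_, ?_⟩
    · -- acyclicity
      set S : V → V → Prop :=
        fun a b => decide (b ∉ O ∧ a ∉ I ∧ a ∈ c b) = true ∧ lam a = MLabel.XY with hS
      have htgt : ∀ a b, S a b → b ∉ O := by
        intro a b h
        have := of_decide_eq_true h.1
        exact this.1
      have hstep : ∀ a b, S a b → a ∉ O → prec b a := by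
        intro a b h haO
        have hd := of_decide_eq_true h.1
        have hXY := h.2
        by_cases hab : a = b
        · subst hab
          exact absurd hd.2.2 (pf.P4 a haO hXY).1
        · exact pf.P1 b hd.1 a hd.2.2 haO (fun hh => hab hh.symm)
            (by rw [hXY]; intro hh; cases hh) (by rw [hXY]; intro hh; cases hh)
      have hchain : ∀ a b, Relation.TransGen S a b → a ∉ O → prec b a := by
        intro a b h
        induction h using Relation.TransGen.head_induction_on with
        | single h => exact fun ha => hstep _ _ h ha
        | head h h' ihp =>
          intro ha
          exact pf.trans _ _ _ (ihp (htgt _ _ h)) (hstep _ _ h ha)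
      have htgtT : ∀ a b, Relation.TransGen S a b → b ∉ O := by
        intro a b h
        induction h with
        | single h => exact htgt _ _ h
        | tail _ h _ => exact htgt _ _ h
      intro v hTG
      exact pf.irrefl v (hchain v v hTG (htgtT v v hTG))
    · -- matrix identity
      rw [matrix_iff]
      intro v hv w hw
      have hc' : (Finset.univ.filter fun u =>
          u ∉ I ∧ decide (w ∉ O ∧ u ∉ I ∧ u ∈ c w) = true) = c w := by
        ext u
        simp only [Finset.mem_filter, Finset.mem_univ, true_and, decide_eq_true_eq]
        exact ⟨fun h => h.2.2.2, fun h => ⟨pf.csub w hw u h, hw, pf.csub w hw u h, h⟩⟩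
      rw [hc']
      constructor
      · intro hOdds
        by_contra hne
        rcases (foc w hw).2.1 v hv hne hOdds with h | h | h | h <;>
          rcases hlam v hv with h' | h' <;> rw [h'] at h <;> cases h
      · rintro rfl
        rcases hlam v hv with h | h
        · exact pf.P7 v hv h
        · exact (pf.P4 v hv h).2
  · -- existence of F → flow
    rintro ⟨F, hac, hmat⟩
    obtain ⟨pf, foc⟩ := part2_aux G I O lam hlam F hac hmat
    exact ⟨_, _, pf, foc⟩
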